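/- Let K be a field containing μ_n(K) (with char K ∤ n), f ∈ K×, d the maximal divisor of n with f a d-th power, assume additionally K contains a root of T^4+4. Then the natural action of μ_n(K) on K[T]/(T^n − f) (acting trivially on K, by multiplication on T) permutes transitively the d field factors of the product decomposition ∏_{ζ∈μ_d(K)} K[T]/(T^{n'} − ζg). -/

import Mathlib

open Polynomial
open IntermediateField

universe u

theorem my_X_pow_sub_C_irreducible_of_primroot {K : Type u} [Field K] {n : ℕ} (hn : n ≠ 0)
    {ζ : K} (hζ : IsPrimitiveRoot ζ n) {a : K}
    (ha : ∀ p : ℕ, p.Prime → p ∣ n → ∀ b : K, b ^ p ≠ a) :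
    Irreducible (X ^ n - C a) := by
  induction n using induction_on_primes generalizing K with
  | zero => simp at hn
  | one => simpa using irreducible_X_sub_C a
  | prime_mul p m hp IH =>
    have hm : m ≠ 0 := by rintro rfl; simp at hn
    rw [mul_comm]
    apply X_pow_mul_sub_C_irreducible
      (X_pow_sub_C_irreducible_of_prime hp (ha p hp (dvd_mul_right _ _)))
    intro E _ _ x hx
    have hint : IsIntegral K x := not_not.mp fun h ↦ by
      simpa only [degree_zero, degree_X_pow_sub_C hp.pos,
        WithBot.natCast_ne_bot] using congr_arg degree (hx.symm.trans (dif_neg h))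
    have hζm : IsPrimitiveRoot (ζ ^ p) m :=
      hζ.pow (Nat.pos_of_ne_zero hn) rfl
    have hζF : IsPrimitiveRoot (algebraMap K K⟮x⟯ (ζ ^ p)) m :=
      hζm.map_of_injective (algebraMap K K⟮x⟯).injective
    refine IH hm hζF ?_
    intro q hq hqm b hb
    have hqn : q ∣ p * m := dvd_mul_of_dvd_right hqm p
    -- norm of the generator
    have hNgen : Algebra.norm K (AdjoinSimple.gen K x) = (-1) ^ (p + 1) * a := by
      rw [← adjoin.powerBasis_gen hint, Algebra.PowerBasis.norm_gen_eq_coeff_zero_minpoly]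
      simp only [adjoin.powerBasis_gen, minpoly_gen, hx, adjoin.powerBasis_dim]
      rw [coeff_sub, coeff_X_pow, coeff_C_zero, natDegree_X_pow_sub_C,
        if_neg (Ne.symm hp.ne_zero)]
      ring
    have hNb : (Algebra.norm K b) ^ q = (-1) ^ (p + 1) * a := by
      rw [← map_pow, hb, hNgen]
    rcases hq.eq_two_or_odd' with rfl | hqodd
    · -- q = 2
      rcases hp.eq_two_or_odd' with rfl | hpodd
      · -- p = 2 : use i with i ^ 2 = -1
        have h4 : (4 : ℕ) ∣ 2 * m := by
          obtain ⟨c, rfl⟩ := hqm; exact ⟨c, by ring⟩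
        obtain ⟨c, hc⟩ := h4
        have hi2 : (ζ ^ c) ^ 2 = -1 := by
          have h1 : ((ζ ^ c) ^ 2) ^ 2 = 1 := by
            rw [← pow_mul, ← pow_mul, ← hζ.pow_eq_one]
            congr 1; omega
          have h2 : (ζ ^ c) ^ 2 ≠ 1 := by
            intro h
            have hdvd := hζ.dvd_of_pow_eq_one _ (by rw [← pow_mul] at h; exact h)
            rw [hc] at hdvd
            have hc0 : c ≠ 0 := by omega
            have := Nat.le_of_dvd (by omega) hdvd
            omega
          rcases mul_eq_zero.mp (show ((ζ^c)^2 - 1) * ((ζ^c)^2 + 1) = 0 by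
            linear_combination h1) with h | h
          · exact absurd (sub_eq_zero.mp h) h2
          · exact eq_neg_of_add_eq_zero_left h
        exact ha 2 hq hqn (ζ ^ c * Algebra.norm K b) (by
          rw [mul_pow, hi2, hNb]; ring)
      · -- p odd
        exact ha 2 hq hqn (Algebra.norm K b) (by
          rw [hNb, hpodd.add_one.neg_one_pow, one_mul])
    · -- q odd
      refine ha q hq hqn ((-1) ^ (p + 1) * Algebra.norm K b) ?_
      rw [mul_pow, hNb, ← pow_mul]
      rcases Nat.even_or_odd (p + 1) with he | ho
      · rw [he.neg_one_pow, (he.mul_right q).neg_one_pow, one_mul, one_mul]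
      · rw [ho.neg_one_pow, (ho.mul hqodd).neg_one_pow]; ring

lemma my_span_mk_isMaximal {K : Type*} [Field K] {h q : K[X]} (hq : Irreducible q)
    (hdvd : q ∣ h) : (Ideal.span {AdjoinRoot.mk h q}).IsMaximal := by
  haveI := Fact.mk hq
  let ψ : AdjoinRoot h →ₐ[K] AdjoinRoot q :=
    AdjoinRoot.liftAlgHom h (Algebra.ofId K _) (AdjoinRoot.root q) (by
      have : aeval (AdjoinRoot.root q) h = 0 := by
        obtain ⟨c, rfl⟩ := hdvd
        rw [map_mul, AdjoinRoot.aeval_eq, AdjoinRoot.mk_self, zero_mul]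
      exact this)
  have hψ : ∀ p : K[X], ψ (AdjoinRoot.mk h p) = AdjoinRoot.mk q p := fun p => by
    show aeval (AdjoinRoot.root q) p = _
    exact AdjoinRoot.aeval_eq p
  have hsurj : Function.Surjective ψ.toRingHom := by
    intro z
    obtain ⟨p, rfl⟩ := AdjoinRoot.mk_surjective z
    exact ⟨AdjoinRoot.mk h p, by
      simp only [AlgHom.toRingHom_eq_coe, RingHom.coe_coe, hψ]⟩
  have hker : RingHom.ker ψ.toRingHom = Ideal.span {AdjoinRoot.mk h q} := by
    ext x
    obtain ⟨p, rfl⟩ := AdjoinRoot.mk_surjective x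
    simp only [RingHom.mem_ker, AlgHom.toRingHom_eq_coe, RingHom.coe_coe, hψ,
      AdjoinRoot.mk_eq_zero]
    constructor
    · rintro ⟨c, rfl⟩
      rw [map_mul]
      exact Ideal.mul_mem_right _ _ (Ideal.subset_span rfl)
    · intro hx
      rw [Ideal.mem_span_singleton] at hx
      obtain ⟨z, hz⟩ := hx
      obtain ⟨c, rfl⟩ := AdjoinRoot.mk_surjective z
      rw [← map_mul, ← sub_eq_zero, ← map_sub, AdjoinRoot.mk_eq_zero] at hz
      obtain ⟨e, he⟩ := hz
      obtain ⟨w, rfl⟩ := hdvd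
      exact ⟨c + w * e, by linear_combination he⟩
  exact hker ▸ RingHom.ker_isMaximal_of_surjective ψ.toRingHom hsurj

/-- With `K`, `n`, `f`, `d`, `g`, `n' = n/d` as in the decomposition lemma, the natural action
of `μ_n(K)` on `K[T]/(Tⁿ - f)` (trivial on `K`, by multiplication on `T`) permutes transitively
the `d` field factors (i.e. the minimal primes) of `K[T]/(Tⁿ - f)`. -/
theorem stmt_8 (K : Type*) [Field K] (n : ℕ) (hn : 0 < n)
    (hchar : ¬ (ringChar K ∣ n)) (hμ : ∃ ζ : K, IsPrimitiveRoot ζ n)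
    (hy : ∃ y : K, y ^ 4 = -4)
    (f : K) (hf : f ≠ 0) (d : ℕ) (hd : d ∣ n) (g : K) (hg : g ^ d = f)
    (hmax : ∀ e : ℕ, e ∣ n → (∃ h : K, h ^ e = f) → e ≤ d)
    (n' : ℕ) (hn' : n = d * n') :
    ∀ P Q' : Ideal (AdjoinRoot (X ^ n - C f)),
      P ∈ minimalPrimes (AdjoinRoot (X ^ n - C f)) →
      Q' ∈ minimalPrimes (AdjoinRoot (X ^ n - C f)) →
      ∃ (ξ : K) (_ : ξ ^ n = 1)
        (σ : AdjoinRoot (X ^ n - C f) ≃ₐ[K] AdjoinRoot (X ^ n - C f)),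
        σ (AdjoinRoot.root _) =
            algebraMap K (AdjoinRoot (X ^ n - C f)) ξ * AdjoinRoot.root _ ∧
          Ideal.comap (σ : AdjoinRoot (X ^ n - C f) →+* AdjoinRoot (X ^ n - C f)) P = Q' := by
  intro P Q' hP hQ
  obtain ⟨ω, hω⟩ := hμ
  have hd0 : d ≠ 0 := by rintro rfl; omega
  have hn'0 : n' ≠ 0 := by rintro rfl; omega
  set ω' : K := ω ^ n' with hω'def
  have hω' : IsPrimitiveRoot ω' d := hω.pow hn (hn'.trans (mul_comm d n'))
  have hωd : IsPrimitiveRoot (ω ^ d) n' := hω.pow hn hn'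
  -- irreducibility of the factors
  have hirr : ∀ ζ : K, ζ ^ d = 1 → Irreducible (X ^ n' - C (ζ * g)) := by
    intro ζ hζd
    refine my_X_pow_sub_C_irreducible_of_primroot hn'0 hωd ?_
    intro p hp hpn' b hb
    have hbf : b ^ (p * d) = f := by
      rw [pow_mul, hb, mul_pow, hζd, one_mul, hg]
    have hdvd : p * d ∣ n := by
      obtain ⟨c, rfl⟩ := hpn'
      exact ⟨c, by rw [hn']; ring⟩
    have hle := hmax (p * d) hdvd ⟨b, hbf⟩
    have h2 : 2 * d ≤ p * d := Nat.mul_le_mul_right d hp.two_le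
    omega
  -- the factorization
  have hfact : (X : K[X]) ^ n - C f
      = ∏ i ∈ Finset.range d, (X ^ n' - C (ω' ^ i * g)) := by
    have h1 : (X : K[X]) ^ d - C f
        = ∏ i ∈ Finset.range d, (X - C (ω' ^ i * g)) :=
      X_pow_sub_C_eq_prod hω' (Nat.pos_of_ne_zero hd0) hg
    calc (X : K[X]) ^ n - C f = ((X : K[X]) ^ d - C f).comp (X ^ n') := by
          rw [sub_comp, pow_comp, X_comp, C_comp, ← pow_mul, mul_comm n' d, ← hn']
      _ = ∏ i ∈ Finset.range d, (X ^ n' - C (ω' ^ i * g)) := by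
          rw [h1, prod_comp]
          exact Finset.prod_congr rfl fun i _ => by rw [sub_comp, X_comp, C_comp]
  have hζd' : ∀ i : ℕ, (ω' ^ i) ^ d = 1 := fun i => by
    rw [← pow_mul, mul_comm, pow_mul, hω'.pow_eq_one, one_pow]
  have hqdvd : ∀ i ∈ Finset.range d, (X : K[X]) ^ n' - C (ω' ^ i * g) ∣ X ^ n - C f := by
    intro i hi
    rw [hfact]
    exact Finset.dvd_prod_of_mem _ hi
  -- classification of primes
  have hclass : ∀ J : Ideal (AdjoinRoot (X ^ n - C f)), J.IsPrime →
      ∃ i < d, J = Ideal.span {AdjoinRoot.mk (X ^ n - C f) (X ^ n' - C (ω' ^ i * g))} := by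
    intro J hJ
    have h0 : AdjoinRoot.mk (X ^ n - C f)
        (∏ i ∈ Finset.range d, ((X : K[X]) ^ n' - C (ω' ^ i * g))) ∈ J := by
      rw [← hfact, AdjoinRoot.mk_self]
      exact J.zero_mem
    rw [map_prod] at h0
    obtain ⟨i, hi, hmem⟩ := (Ideal.IsPrime.prod_mem_iff (hp := hJ)).mp h0
    refine ⟨i, Finset.mem_range.mp hi, ?_⟩
    have hmaxi := my_span_mk_isMaximal (hirr _ (hζd' i)) (hqdvd i hi)
    exact ((hmaxi.eq_of_le hJ.ne_top (Ideal.span_le.mpr (by simpa using hmem)))).symm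
  have hPp : P.IsPrime := hP.1.1
  have hQp : Q'.IsPrime := hQ.1.1
  obtain ⟨i, hi, hPi⟩ := hclass P hPp
  obtain ⟨j, hj, hQj⟩ := hclass Q' hQp
  -- the root of unity and the automorphism
  set ξ : K := ω ^ (j + d - i) with hξdef
  have hξ : ξ ^ n = 1 := by rw [hξdef, ← pow_mul, mul_comm, pow_mul, hω.pow_eq_one, one_pow]
  haveI : NeZero n := ⟨hn.ne'⟩
  set η : rootsOfUnity n K := rootsOfUnity.mkOfPowEq ξ hξ with hηdef
  set σ := autAdjoinRootXPowSubC n f η with hσdef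
  have hroot : σ (AdjoinRoot.root (X ^ n - C f))
      = algebraMap K (AdjoinRoot (X ^ n - C f)) ξ * AdjoinRoot.root (X ^ n - C f) := by
    rw [hσdef, autAdjoinRootXPowSubC_root, Algebra.smul_def]
    congr 1
  refine ⟨ξ, hξ, σ, hroot, ?_⟩
  -- key scalar identity
  have hkey : ξ ^ n' * (ω' ^ i * g) = ω' ^ j * g := by
    have h1 : ξ ^ n' = ω' ^ (j + d - i) := by
      rw [hξdef, hω'def]; exact pow_right_comm ω _ n' 
    rw [h1, ← mul_assoc, ← pow_add]
    have h2 : j + d - i + i = j + d := by omega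
    rw [h2, pow_add, hω'.pow_eq_one, mul_one]
  have hmk : ∀ c : K, AdjoinRoot.mk (X ^ n - C f) ((X : K[X]) ^ n' - C c)
      = AdjoinRoot.root (X ^ n - C f) ^ n'
        - algebraMap K (AdjoinRoot (X ^ n - C f)) c := by
    intro c
    rw [map_sub, map_pow, AdjoinRoot.mk_X, AdjoinRoot.algebraMap_eq]
    rfl
  have hgen : σ (AdjoinRoot.mk (X ^ n - C f) ((X : K[X]) ^ n' - C (ω' ^ j * g)))
      = algebraMap K (AdjoinRoot (X ^ n - C f)) (ξ ^ n')
        * AdjoinRoot.mk (X ^ n - C f) ((X : K[X]) ^ n' - C (ω' ^ i * g)) := by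
    rw [hmk, hmk, map_sub, map_pow, hroot, mul_pow, ← map_pow, AlgEquiv.commutes,
      mul_sub, ← map_mul, hkey]
  have hQle : Q' ≤ Ideal.comap (σ : AdjoinRoot (X ^ n - C f) →+* AdjoinRoot (X ^ n - C f)) P := by
    rw [hQj, Ideal.span_le]
    simp only [Set.singleton_subset_iff, SetLike.mem_coe, Ideal.mem_comap]
    show σ _ ∈ P
    rw [hgen, hPi]
    exact Ideal.mul_mem_left _ _ (Ideal.subset_span rfl)
  have hQmax : Q'.IsMaximal := hQj ▸ my_span_mk_isMaximal (hirr _ (hζd' j))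
    (hqdvd j (Finset.mem_range.mpr hj))
  haveI : P.IsPrime := hPp
  exact ((hQmax.eq_of_le (Ideal.IsPrime.comap _).ne_top hQle)).symm
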